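/- Let g, d : ℕ → ℝ_{>0} be functions with g(N) → ∞ as N → ∞, g(N) ≤ N for all N, and d(N) ≤ N for all N. Suppose that either (i) liminf_{N→∞} g(N)/N > 0 and d(N) → ∞ as N → ∞, or (ii) g(N)/N → 0 and d(N)·g(N)/(N·log(N/g(N))) → ∞ as N → ∞. Then there exists a function n : ℕ → ℝ_{>0} such that n(N) → ∞, n(N)/g(N) → 0, and (n(N)/N)·d(N) − log(N/g(N)) → ∞ as N → ∞. -/

import Mathlib

open Filter

lemma sqrt_tendsto_atTop' : Tendsto Real.sqrt atTop atTop :=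
  tendsto_atTop_atTop_of_monotone (fun _ _ h => Real.sqrt_le_sqrt h)
    (fun b => ⟨(max b 0) ^ 2, by
      rw [Real.sqrt_sq (le_max_right b 0)]; exact le_max_left b 0⟩)

/-- **Existence of a suitable sloppiness level `n(N)`.**
Given `g, d : ℕ → ℝ_{>0}` with `g(N) → ∞`, `g(N) ≤ N`, `d(N) ≤ N`, and either
(i) `liminf g(N)/N > 0` and `d(N) → ∞`, or
(ii) `g(N)/N → 0` and `d(N)·g(N)/(N·log(N/g(N))) → ∞`,
there exists `n : ℕ → ℝ_{>0}` with `n(N) → ∞`, `n(N)/g(N) → 0`, and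
`(n(N)/N)·d(N) − log(N/g(N)) → ∞`. -/
theorem exists_sloppiness_level
    (g d : ℕ → ℝ)
    (hgpos : ∀ N, 0 < g N) (hdpos : ∀ N, 0 < d N)
    (hgN : ∀ N : ℕ, 1 ≤ N → g N ≤ N) (hdN : ∀ N : ℕ, 1 ≤ N → d N ≤ N)
    (hginf : Tendsto g atTop atTop)
    (hcase :
      (0 < Filter.liminf (fun N : ℕ => g N / N) atTop ∧
        Tendsto d atTop atTop) ∨
      (Tendsto (fun N : ℕ => g N / N) atTop (nhds 0) ∧
        Tendsto (fun N : ℕ => d N * g N / ((N : ℝ) * Real.log ((N : ℝ) / g N)))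
          atTop atTop)) :
    ∃ n : ℕ → ℝ, (∀ N, 0 < n N) ∧
      Tendsto n atTop atTop ∧
      Tendsto (fun N : ℕ => n N / g N) atTop (nhds 0) ∧
      Tendsto (fun N : ℕ => (n N / N) * d N - Real.log ((N : ℝ) / g N))
        atTop atTop := by
  rcases hcase with ⟨hlim, hd⟩ | ⟨hg0, hA⟩
  · -- Case (i): n N = g N / sqrt (d N)
    set c : ℝ := liminf (fun N : ℕ => g N / N) atTop / 2 with hc
    have hcpos : 0 < c := by rw [hc]; linarith
    have hbdd : IsBoundedUnder (· ≥ ·) atTop (fun N : ℕ => g N / N) :=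
      ⟨0, by rw [eventually_map]; exact Eventually.of_forall fun N =>
        div_nonneg (hgpos N).le (Nat.cast_nonneg N)⟩
    have hev : ∀ᶠ N : ℕ in atTop, c < g N / N := by
      refine eventually_lt_of_lt_liminf ?_ hbdd
      rw [hc]; linarith
    have hsd : Tendsto (fun N => Real.sqrt (d N)) atTop atTop :=
      sqrt_tendsto_atTop'.comp hd
    refine ⟨fun N => g N / Real.sqrt (d N), fun N => div_pos (hgpos N)
      (Real.sqrt_pos.mpr (hdpos N)), ?_, ?_, ?_⟩
    · -- n → ∞ : bounded below eventually by c * sqrt N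
      have hNs : Tendsto (fun N : ℕ => c * Real.sqrt N) atTop atTop :=
        (sqrt_tendsto_atTop'.comp tendsto_natCast_atTop_atTop).const_mul_atTop hcpos
      refine tendsto_atTop_mono' _ ?_ hNs
      filter_upwards [hev, eventually_ge_atTop 1] with N hcN hN1
      have hN0 : (0:ℝ) < N := by exact_mod_cast hN1
      have hdn : Real.sqrt (d N) ≤ Real.sqrt N := Real.sqrt_le_sqrt (hdN N hN1)
      have h1 : c * N ≤ g N := by
        have := (lt_div_iff₀ hN0).mp hcN; linarith
      have hsp : 0 < Real.sqrt (d N) := Real.sqrt_pos.mpr (hdpos N)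
      calc c * Real.sqrt N = c * N / Real.sqrt N := by
            rw [mul_div_assoc, Real.div_sqrt]
        _ ≤ g N / Real.sqrt (d N) := div_le_div₀ (hgpos N).le h1 hsp hdn
    · -- n / g = 1 / sqrt d → 0
      have : (fun N : ℕ => g N / Real.sqrt (d N) / g N)
          = fun N => 1 / Real.sqrt (d N) := by
        funext N
        rw [div_right_comm, div_self (hgpos N).ne']
      rw [this]
      simp only [one_div]; exact hsd.inv_tendsto_atTop
    · -- main limit
      have hlow : Tendsto (fun N : ℕ => c * Real.sqrt (d N) + (- Real.log c⁻¹))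
          atTop atTop :=
        tendsto_atTop_add_const_right _ _ (hsd.const_mul_atTop hcpos)
      refine tendsto_atTop_mono' _ ?_ hlow
      filter_upwards [hev, eventually_ge_atTop 1] with N hcN hN1
      have hN0 : (0:ℝ) < N := by exact_mod_cast hN1
      have hsp : 0 < Real.sqrt (d N) := Real.sqrt_pos.mpr (hdpos N)
      have hss : Real.sqrt (d N) * Real.sqrt (d N) = d N :=
        Real.mul_self_sqrt (hdpos N).le
      have hkey : g N / Real.sqrt (d N) / N * d N = g N / N * Real.sqrt (d N) := by
        rw [← hss]
        field_simp
        rw [Real.sqrt_sq hsp.le]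
      rw [hkey]
      have h1 : c * Real.sqrt (d N) ≤ g N / N * Real.sqrt (d N) :=
        mul_le_mul_of_nonneg_right hcN.le hsp.le
      have h2 : Real.log ((N:ℝ) / g N) ≤ Real.log c⁻¹ := by
        apply Real.log_le_log (div_pos hN0 (hgpos N))
        rw [show (N:ℝ) / g N = (g N / (N:ℝ))⁻¹ by rw [inv_div]]
        exact inv_anti₀ hcpos hcN.le
      linarith
  · -- Case (ii)
    set L : ℕ → ℝ := fun N => Real.log ((N : ℝ) / g N) with hL
    set A : ℕ → ℝ := fun N => d N * g N / ((N : ℝ) * L N) with hAdef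
    -- N / g N → ∞, hence L → ∞
    have hNg : Tendsto (fun N : ℕ => (N : ℝ) / g N) atTop atTop := by
      have h1 : Tendsto (fun N : ℕ => g N / N) atTop (nhdsWithin 0 (Set.Ioi 0)) := by
        apply tendsto_nhdsWithin_of_tendsto_nhds_of_eventually_within _ hg0
        filter_upwards [eventually_ge_atTop 1] with N hN1
        have hN0 : (0:ℝ) < N := by exact_mod_cast hN1
        exact div_pos (hgpos N) hN0
      have h2 := h1.inv_tendsto_nhdsGT_zero
      refine h2.congr fun N => ?_
      simp [Pi.inv_apply, inv_div]
    have hLinf : Tendsto L atTop atTop := Real.tendsto_log_atTop.comp hNg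
    have hmax : Tendsto (fun N => max (A N) 1) atTop atTop :=
      tendsto_atTop_mono (fun N => le_max_left _ _) hA
    have hsmax : Tendsto (fun N => Real.sqrt (max (A N) 1)) atTop atTop :=
      sqrt_tendsto_atTop'.comp hmax
    have hspos : ∀ N, 0 < Real.sqrt (max (A N) 1) := fun N =>
      Real.sqrt_pos.mpr (lt_of_lt_of_le one_pos (le_max_right _ _))
    refine ⟨fun N => g N / Real.sqrt (max (A N) 1),
      fun N => div_pos (hgpos N) (hspos N), ?_, ?_, ?_⟩
    · -- n → ∞ : bounded below eventually by √(g N)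
      refine tendsto_atTop_mono' _ ?_ (sqrt_tendsto_atTop'.comp hginf)
      filter_upwards [hA.eventually_ge_atTop 1, hLinf.eventually_ge_atTop 1,
        eventually_ge_atTop 1] with N hA1 hL1 hN1
      have hN0 : (0:ℝ) < N := by exact_mod_cast hN1
      have hNL : (0:ℝ) < (N:ℝ) * L N := by nlinarith
      have hAg : A N ≤ g N := by
        rw [hAdef]
        rw [div_le_iff₀ hNL]
        have hdN' := hdN N hN1
        nlinarith [mul_le_mul_of_nonneg_right hdN' (hgpos N).le,
          mul_nonneg (mul_nonneg hN0.le (hgpos N).le) (sub_nonneg.mpr hL1)]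
      have hmax_eq : max (A N) 1 = A N := max_eq_left hA1
      have hsle : Real.sqrt (max (A N) 1) ≤ Real.sqrt (g N) := by
        rw [hmax_eq]; exact Real.sqrt_le_sqrt hAg
      calc Real.sqrt (g N) = g N / Real.sqrt (g N) := (Real.div_sqrt).symm
        _ ≤ g N / Real.sqrt (max (A N) 1) :=
            div_le_div_of_nonneg_left (hgpos N).le (hspos N) hsle
    · -- n / g → 0
      have : (fun N : ℕ => g N / Real.sqrt (max (A N) 1) / g N)
          = fun N => 1 / Real.sqrt (max (A N) 1) := by
        funext N
        rw [div_right_comm, div_self (hgpos N).ne']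
      rw [this]
      simp only [one_div]; exact hsmax.inv_tendsto_atTop
    · -- main limit : expression = √A · L − L ≥ √(max A 1) − 1 eventually
      have hlow : Tendsto (fun N : ℕ => Real.sqrt (max (A N) 1) + (-1 : ℝ))
          atTop atTop := tendsto_atTop_add_const_right _ _ hsmax
      refine tendsto_atTop_mono' _ ?_ hlow
      filter_upwards [hA.eventually_ge_atTop 1, hLinf.eventually_ge_atTop 1,
        eventually_ge_atTop 1] with N hA1 hL1 hN1
      have hN0 : (0:ℝ) < N := by exact_mod_cast hN1
      have hNL : (0:ℝ) < (N:ℝ) * L N := by nlinarith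
      have hApos : (0:ℝ) < A N := lt_of_lt_of_le one_pos hA1
      have hmax_eq : max (A N) 1 = A N := max_eq_left hA1
      rw [hmax_eq]
      set s : ℝ := Real.sqrt (A N) with hs
      have hsp : 0 < s := Real.sqrt_pos.mpr hApos
      have hss : s * s = A N := Real.mul_self_sqrt hApos.le
      have hs1 : 1 ≤ s := by
        rw [hs, show (1:ℝ) = Real.sqrt 1 from Real.sqrt_one.symm]
        exact Real.sqrt_le_sqrt hA1
      have hdg : A N * ((N:ℝ) * L N) = d N * g N := by
        rw [hAdef]; exact div_mul_cancel₀ _ hNL.ne'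
      have hkey : g N / s / N * d N = s * L N := by
        have c1 : g N / s / N * d N = (d N * g N) / (s * N) := by
          field_simp
        rw [c1, ← hdg, ← hss]
        field_simp
      rw [hkey]
      nlinarith
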